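/- Let L ⊆ Σ* be a prefix-closed regular language and h : Σ → Σ' ∪ {ε} an alphabetic homomorphism, extended to finite and infinite words (where h(x) for an ω-word x is defined only if h applied to the prefixes of x yields words of unbounded length). Then lim(h(L)) = h(lim(L)). -/

import Mathlib

/-- The length-`n` prefix of an ω-word. -/
def ωtake {α : Type*} (x : ℕ → α) (n : ℕ) : List α := List.ofFn (fun i : Fin n => x i)

/-- Concatenation of a finite word with an ω-word. -/
def ωcat {α : Type*} (w : List α) (x : ℕ → α) : ℕ → α :=
  fun n => if h : n < w.length then w.get ⟨n, h⟩ else x (n - w.length)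

/-- The set of finite prefixes of ω-words in `L`. -/
def Pre {α : Type*} (L : Set (ℕ → α)) : Set (List α) := {w | ∃ x ∈ L, ∃ n, w = ωtake x n}

/-- Eilenberg limit: ω-words with infinitely many prefixes in `M`. -/
def Lim {α : Type*} (M : Set (List α)) : Set (ℕ → α) := {x | {n | ωtake x n ∈ M}.Infinite}

/-- `P` is a relative liveness property of `L`. -/
def RelLive {α : Type*} (P L : Set (ℕ → α)) : Prop :=
  ∀ w ∈ Pre L, ∃ x : ℕ → α, ωcat w x ∈ L ∧ ωcat w x ∈ P

/-- `P` is a relative safety property of `L`. -/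
def RelSafe {α : Type*} (P L : Set (ℕ → α)) : Prop :=
  ∀ x ∈ L, x ∉ P → ∃ n : ℕ, ∀ z : ℕ → α, ωcat (ωtake x n) z ∈ L → ωcat (ωtake x n) z ∉ P


/-- Letterwise extension of an alphabetic homomorphism (none plays the role of the empty word). -/
def hword {α β : Type*} (h : α → Option β) (w : List α) : List β := w.filterMap h

/-- w is a prefix of the ω-word y. -/
def IsωPrefix {β : Type*} (w : List β) (y : ℕ → β) : Prop := w = ωtake y w.length

/-- y is the image of the ω-word x under the abstraction homomorphism h:
all images of prefixes of x are prefixes of y and their lengths are unbounded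
(i.e. h(x) is defined and equals y). -/
def ωMapsTo {α β : Type*} (h : α → Option β) (x : ℕ → α) (y : ℕ → β) : Prop :=
  (∀ m : ℕ, IsωPrefix (hword h (ωtake x m)) y) ∧
  ∀ N : ℕ, ∃ m : ℕ, N ≤ (hword h (ωtake x m)).length

/-- A finite-word language is prefix-closed. -/
def PrefixClosed {α : Type*} (M : Set (List α)) : Prop :=
  ∀ u v : List α, u <+: v → v ∈ M → u ∈ M

section aux
variable {α β : Type*}

lemma ωtake_length (x : ℕ → α) (n : ℕ) : (ωtake x n).length = n := by simp [ωtake]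

lemma ωtake_eq_take (x : ℕ → α) {m n : ℕ} (hmn : m ≤ n) : ωtake x m = (ωtake x n).take m := by
  apply List.ext_getElem
  · simp [ωtake]; omega
  · intro i h1 h2
    simp [ωtake]

lemma prefix_ωtake {u : List α} {x : ℕ → α} {n : ℕ} (hu : u <+: ωtake x n) :
    u = ωtake x u.length := by
  have hl : u.length ≤ n := by
    have := hu.length_le; simpa [ωtake_length] using this
  rw [ωtake_eq_take x hl]
  exact List.prefix_iff_eq_take.mp hu

lemma ωtake_prefix (x : ℕ → α) {m n : ℕ} (hmn : m ≤ n) : ωtake x m <+: ωtake x n := by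
  rw [ωtake_eq_take x hmn]; exact List.take_prefix _ _

lemma hword_append (h : α → Option β) (u v : List α) :
    hword h (u ++ v) = hword h u ++ hword h v := by simp [hword]

lemma hword_prefix (h : α → Option β) {u v : List α} (huv : u <+: v) :
    hword h u <+: hword h v := by
  obtain ⟨t, rfl⟩ := huv
  rw [hword_append]; exact List.prefix_append _ _

lemma nat_ivt (f : ℕ → ℕ) (hstep : ∀ k, f (k+1) ≤ f k + 1) :
    ∀ m n, f 0 ≤ n → n ≤ f m → ∃ k ≤ m, f k = n := by
  intro m
  induction m with
  | zero => exact fun n h1 h2 => ⟨0, le_refl 0, le_antisymm h1 h2⟩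
  | succ m ih =>
    intro n h1 h2
    by_cases hc : n ≤ f m
    · obtain ⟨k, hk, hfk⟩ := ih n h1 hc
      exact ⟨k, Nat.le_succ_of_le hk, hfk⟩
    · push_neg at hc
      have := hstep m
      exact ⟨m+1, le_refl _, by omega⟩

lemma hword_take_succ (h : α → Option β) (u : List α) (k : ℕ) :
    (hword h (u.take (k+1))).length ≤ (hword h (u.take k)).length + 1 := by
  rw [List.take_succ, hword_append, List.length_append]
  have : (hword h u[k]?.toList).length ≤ u[k]?.toList.length := List.length_filterMap_le _ _
  have h2 : u[k]?.toList.length ≤ 1 := by cases u[k]? <;> simp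
  omega

lemma exists_prefix_hword_len (h : α → Option β) (w u : List α) (n : ℕ)
    (h1 : (hword h w).length ≤ n) (h2 : n ≤ (hword h (w ++ u)).length) :
    ∃ p, p <+: u ∧ (hword h (w ++ p)).length = n := by
  have step : ∀ k, (hword h (w ++ u.take (k+1))).length ≤ (hword h (w ++ u.take k)).length + 1 := by
    intro k
    rw [hword_append, hword_append, List.length_append, List.length_append]
    have := hword_take_succ h u k
    omega
  obtain ⟨k, hk, hfk⟩ := nat_ivt (fun k => (hword h (w ++ u.take k)).length) step u.length n
    (by simpa using h1) (by simpa using h2)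
  exact ⟨u.take k, List.take_prefix _ _, hfk⟩

lemma pigeon {γ : Type*} (f : ℕ → γ) (s : Set γ) (hs : s.Finite) (hf : ∀ n, f n ∈ s) :
    ∃ q, {n | f n = q}.Infinite := by
  by_contra hcon
  push_neg at hcon
  have : (Set.univ : Set ℕ) ⊆ ⋃ q ∈ s, {n | f n = q} := by
    intro n _
    exact Set.mem_biUnion (hf n) rfl
  exact Set.infinite_univ (Set.Finite.subset (hs.biUnion (fun q _ => hcon q)) this)

lemma unbounded_infinite {s : Set ℕ} (hs : ∀ N, ∃ k ∈ s, N ≤ k) : s.Infinite := by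
  by_contra hcon
  rw [Set.not_infinite] at hcon
  obtain ⟨b, hb⟩ := hcon.bddAbove
  obtain ⟨k, hk, hbk⟩ := hs (b+1)
  exact absurd (hb hk) (by omega)

lemma infinite_unbounded {s : Set ℕ} (hs : s.Infinite) (N : ℕ) : ∃ k ∈ s, N ≤ k := by
  obtain ⟨k, hk⟩ := (hs.diff (Set.finite_Iio N)).nonempty
  exact ⟨k, hk.1, by simpa [Set.mem_Iio, not_lt] using hk.2⟩

end aux

section core
variable {α β : Type*}

/-- `w` is in `L`, its image is a prefix of `y`, and it can be extended within `L`
to words whose images are arbitrarily long prefixes of `y`. -/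
def Good (h : α → Option β) (L : Set (List α)) (y : ℕ → β) (w : List α) : Prop :=
  w ∈ L ∧ hword h w = ωtake y (hword h w).length ∧
  ∀ N, ∃ u, w ++ u ∈ L ∧ hword h (w ++ u) = ωtake y (hword h (w ++ u)).length ∧
    N ≤ (hword h (w ++ u)).length

lemma good_step (h : α → Option β) (L : Set (List α)) (y : ℕ → β)
    (hpc : PrefixClosed L)
    (hreg : {Q : Set (List α) | ∃ w : List α, Q = {v | w ++ v ∈ L}}.Finite)
    (w : List α) (hw : Good h L y w) :
    ∃ u, u ≠ [] ∧ Good h L y (w ++ u) ∧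
      (hword h (w ++ u)).length = (hword h w).length + 1 := by
  set n := (hword h w).length with hn
  -- witnesses of extendability, with image length at least n+1+N
  have hext : ∀ N : ℕ, ∃ u, w ++ u ∈ L ∧
      hword h (w ++ u) = ωtake y (hword h (w ++ u)).length ∧
      n + 1 + N ≤ (hword h (w ++ u)).length := fun N => hw.2.2 (n + 1 + N)
  choose U hU1 hU2 hU3 using hext
  -- prefixes with image length exactly n+1
  have hpref : ∀ N : ℕ, ∃ p, p <+: U N ∧ (hword h (w ++ p)).length = n + 1 := by
    intro N
    exact exists_prefix_hword_len h w (U N) (n+1) (by omega) (by have := hU3 N; omega)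
  choose P hP1 hP2 using hpref
  -- image of w ++ P N is the length-(n+1) prefix of y
  have hPim : ∀ N, hword h (w ++ P N) = ωtake y (n+1) := by
    intro N
    have hpre : hword h (w ++ P N) <+: ωtake y (hword h (w ++ U N)).length := by
      rw [← hU2 N]
      exact hword_prefix h (by exact (List.prefix_append_right_inj w).mpr (hP1 N))
    have := prefix_ωtake hpre
    rwa [hP2 N] at this
  -- pigeonhole on quotients
  obtain ⟨q, hq⟩ := pigeon (fun N => {v | (w ++ P N) ++ v ∈ L})
    {Q : Set (List α) | ∃ w' : List α, Q = {v | w' ++ v ∈ L}} hreg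
    (fun N => ⟨w ++ P N, rfl⟩)
  obtain ⟨N₀, hN₀⟩ := hq.nonempty
  refine ⟨P N₀, ?_, ⟨?_, ?_, ?_⟩, ?_⟩
  · -- nonempty
    intro hnil
    have h2 := hP2 N₀
    rw [hnil, List.append_nil] at h2
    omega
  · -- membership in L
    exact hpc _ _ ((List.prefix_append_right_inj w).mpr (hP1 N₀)) (hU1 N₀)
  · -- image is prefix of y
    rw [hPim N₀, ωtake_length]
  · -- extendability
    intro M
    obtain ⟨N, hNq, hMN⟩ := infinite_unbounded hq M
    obtain ⟨r, hr⟩ := hP1 N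
    refine ⟨r, ?_, ?_, ?_⟩
    · -- (w ++ P N₀) ++ r ∈ L
      have hrq : r ∈ ({v | (w ++ P N) ++ v ∈ L} : Set (List α)) := by
        show (w ++ P N) ++ r ∈ L
        rw [List.append_assoc, hr]
        exact hU1 N
      rw [Set.mem_setOf_eq] at hNq hN₀
      rw [hNq] at hrq
      rw [← hN₀] at hrq
      exact hrq
    · -- image is a prefix of y
      have e1 : hword h (P N₀) = hword h (P N) := by
        have e := (hPim N₀).trans (hPim N).symm
        rw [hword_append, hword_append] at e
        exact List.append_cancel_left e
      have key : hword h ((w ++ P N₀) ++ r) = hword h (w ++ U N) := by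
        simp only [hword_append, ← hr, e1, List.append_assoc]
      rw [key]
      exact hU2 N
    · have e1 : hword h (P N₀) = hword h (P N) := by
        have e := (hPim N₀).trans (hPim N).symm
        rw [hword_append, hword_append] at e
        exact List.append_cancel_left e
      have key : hword h ((w ++ P N₀) ++ r) = hword h (w ++ U N) := by
        simp only [hword_append, ← hr, e1, List.append_assoc]
      rw [key]
      have := hU3 N; omega
  · rw [hPim N₀, ωtake_length]

end core

theorem lim_hom_comm {α β : Type*} (h : α → Option β) (L : Set (List α))
    (hpc : PrefixClosed L)
    (hreg : {Q : Set (List α) | ∃ w : List α, Q = {v | w ++ v ∈ L}}.Finite) :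
    Lim (hword h '' L) = {y : ℕ → β | ∃ x ∈ Lim L, ωMapsTo h x y} := by

  ext y
  simp only [Set.mem_setOf_eq]
  constructor
  · intro hy
    have hy' : {n | ωtake y n ∈ hword h '' L}.Infinite := hy
    have hgood0 : Good h L y [] := by
      obtain ⟨n0, hn0, -⟩ := infinite_unbounded hy' 0
      obtain ⟨w0, hw0L, -⟩ := hn0
      refine ⟨hpc [] w0 List.nil_prefix hw0L, by simp [hword, ωtake], ?_⟩
      intro N
      obtain ⟨n, hn, hNn⟩ := infinite_unbounded hy' N
      obtain ⟨w, hwL, hw⟩ := hn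
      have hlw : (hword h w).length = n := by rw [hw, ωtake_length]
      refine ⟨w, by simpa using hwL, ?_, ?_⟩
      · show hword h ([] ++ w) = ωtake y (hword h ([] ++ w)).length
        simp only [List.nil_append]
        rw [hlw, hw]
      · simp only [List.nil_append]
        omega
    let step : {w : List α // Good h L y w} → {w : List α // Good h L y w} :=
      fun p => ⟨p.val ++ (good_step h L y hpc hreg p.val p.2).choose,
        (good_step h L y hpc hreg p.val p.2).choose_spec.2.1⟩
    let W : ℕ → {w : List α // Good h L y w} := fun i => step^[i] ⟨[], hgood0⟩
    have hWsucc : ∀ i, W (i+1) = step (W i) := fun i => Function.iterate_succ_apply' step i _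
    have hstep : ∀ p : {w : List α // Good h L y w}, ∃ u, u ≠ [] ∧ (step p).val = p.val ++ u ∧
        (hword h (step p).val).length = (hword h p.val).length + 1 := by
      intro p
      obtain ⟨h1, _, h3⟩ := (good_step h L y hpc hreg p.val p.2).choose_spec
      exact ⟨_, h1, rfl, h3⟩
    have hW0 : (W 0).val = [] := rfl
    have hlenh : ∀ i, (hword h (W i).val).length = i := by
      intro i; induction i with
      | zero => rw [hW0]; simp [hword]
      | succ i ih =>
        obtain ⟨u, -, -, h3⟩ := hstep (W i)
        rw [hWsucc i, h3, ih]
    have hprefix : ∀ i, (W i).val <+: (W (i+1)).val ∧ (W i).val.length < (W (i+1)).val.length := by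
      intro i
      obtain ⟨u, hu, h2, -⟩ := hstep (W i)
      rw [hWsucc i, h2]
      constructor
      · exact List.prefix_append _ _
      · have := List.length_pos_iff.mpr hu
        simp only [List.length_append]
        omega
    have hmono : ∀ i j, i ≤ j → (W i).val <+: (W j).val := by
      intro i j hij
      induction j with
      | zero => rw [Nat.le_zero.mp hij]
      | succ j ih =>
        by_cases hc : i ≤ j
        · exact (ih hc).trans (hprefix j).1
        · have heq : i = j + 1 := by omega
          rw [heq]
    have hlenW : ∀ i, i ≤ (W i).val.length := by
      intro i; induction i with
      | zero => exact Nat.zero_le _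
      | succ i ih => have := (hprefix i).2; omega
    obtain ⟨u0, -, -, hu0len⟩ := hgood0.2.2 1
    have hu0ne : u0 ≠ [] := by
      rintro rfl
      simp [hword] at hu0len
    obtain ⟨a, -⟩ := List.exists_mem_of_ne_nil u0 hu0ne
    let x : ℕ → α := fun n => (W (n+1)).val.getD n a
    have hxtake : ∀ i m, m ≤ (W i).val.length → ωtake x m = (W i).val.take m := by
      intro i m hm
      apply List.ext_getElem
      · simp [ωtake]; omega
      · intro j hj1 hj2
        have hjm : j < m := by simpa [ωtake] using hj1
        have hjlt : j < (W (j+1)).val.length := lt_of_lt_of_le (Nat.lt_succ_self j) (hlenW (j+1))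
        have hji : j < (W i).val.length := lt_of_lt_of_le hjm hm
        have hxj : (ωtake x m)[j] = x j := by simp [ωtake]
        rw [hxj]
        show (W (j+1)).val.getD j a = ((W i).val.take m)[j]
        rw [List.getD_eq_getElem _ _ hjlt, List.getElem_take]
        rcases le_total (j+1) i with hle | hle
        · exact (hmono (j+1) i hle).getElem hjlt
        · exact ((hmono i (j+1) hle).getElem hji).symm
    refine ⟨x, ?_, ?_, ?_⟩
    · apply unbounded_infinite
      intro N
      refine ⟨(W N).val.length, ?_, hlenW N⟩
      show ωtake x (W N).val.length ∈ L
      rw [hxtake N _ le_rfl, List.take_length]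
      exact (W N).2.1
    · intro m
      have h1 : ωtake x m = (W m).val.take m := hxtake m m (hlenW m)
      have h2 : hword h (ωtake x m) <+: ωtake y m := by
        rw [h1]
        have h3 := hword_prefix h (List.take_prefix m (W m).val)
        have h4 := (W m).2.2.1
        rw [hlenh m] at h4
        rwa [h4] at h3
      exact prefix_ωtake h2
    · intro N
      refine ⟨(W N).val.length, ?_⟩
      rw [hxtake N _ le_rfl, List.take_length, hlenh N]
  · rintro ⟨x, hxLim, hmap1, hmap2⟩
    apply unbounded_infinite
    intro N
    obtain ⟨m, hm⟩ := hmap2 N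
    refine ⟨(hword h (ωtake x m)).length, ?_, hm⟩
    have hxm : ωtake x m ∈ L := by
      obtain ⟨k, hk, hmk⟩ := infinite_unbounded hxLim m
      exact hpc _ _ (ωtake_prefix x hmk) hk
    exact ⟨ωtake x m, hxm, (hmap1 m).symm.symm⟩
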